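/- Let h be a hyperbolic conformal automorphism of the open unit disc D (a conformal automorphism of D that is a hyperbolic Möbius transformation), and let c be a point lying on the axis of h (the hyperbolic geodesic of D joining the two fixed points of h on the unit circle). Then for every w in D, ρ(w, h(w)) ≤ exp(ρ(w,c)) · ρ(c, h(c)). -/

import Mathlib

open Complex Metric Set

/-- The hyperbolic metric on the open unit disc:
`ρ(u,v) = 2 · arsinh (|u − v| / √((1 − |u|²)(1 − |v|²)))`. -/
noncomputable def rho (u v : ℂ) : ℝ :=
  2 * Real.arsinh (‖u - v‖ /
    Real.sqrt ((1 - ‖u‖ ^ 2) * (1 - ‖v‖ ^ 2)))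

private lemma sinh_mul_ge (x τ : ℝ) (hx : 1 ≤ x) (hτ : 0 ≤ τ) :
    x * Real.sinh τ ≤ Real.sinh (x * τ) := by
  have key : ∀ t ∈ Set.Ici (0:ℝ), ∀ t' ∈ Set.Ici (0:ℝ), t ≤ t' →
      Real.sinh (x * t) - x * Real.sinh t ≤ Real.sinh (x * t') - x * Real.sinh t' := by
    apply monotoneOn_of_deriv_nonneg (convex_Ici 0)
    · fun_prop
    · fun_prop
    · intro t ht
      have h1 : HasDerivAt (fun t => Real.sinh (x * t) - x * Real.sinh t)
          (Real.cosh (x*t) * (x * 1) - x * Real.cosh t) t :=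
        (((Real.hasDerivAt_sinh (x*t)).comp t ((hasDerivAt_id t).const_mul x)).sub
          ((Real.hasDerivAt_sinh t).const_mul x))
      rw [h1.deriv]
      have ht' : 0 < t := by simpa using ht
      have : Real.cosh t ≤ Real.cosh (x*t) := by
        rw [Real.cosh_le_cosh, _root_.abs_of_nonneg ht'.le, _root_.abs_of_nonneg (by nlinarith : (0:ℝ) ≤ x*t)]
        nlinarith
      nlinarith
  have := key 0 (by simp) τ (by simpa using hτ) hτ
  simp at this
  linarith

private lemma arsinh_cosh_mul_le (d S : ℝ) (hd : 0 ≤ d) (hS : 0 ≤ S) :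
    Real.arsinh (Real.cosh d * S) ≤ Real.exp d * Real.arsinh S := by
  have h1 : Real.cosh d ≤ Real.exp d := by
    rw [Real.cosh_eq]
    have := Real.exp_le_exp.mpr (by linarith : -d ≤ d)
    linarith
  have hx : 1 ≤ Real.exp d := by simpa using Real.exp_le_exp.mpr hd
  have hτ : 0 ≤ Real.arsinh S := by rw [← Real.arsinh_zero]; exact Real.arsinh_le_arsinh.mpr hS
  have h2 : Real.cosh d * S ≤ Real.exp d * Real.sinh (Real.arsinh S) := by
    rw [Real.sinh_arsinh]; nlinarith [Real.cosh_pos d]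
  calc Real.arsinh (Real.cosh d * S)
      ≤ Real.arsinh (Real.sinh (Real.exp d * Real.arsinh S)) :=
        Real.arsinh_le_arsinh.mpr (h2.trans (sinh_mul_ge _ _ hx hτ))
    _ = Real.exp d * Real.arsinh S := Real.arsinh_sinh _

private lemma normSq_lin (α β z : ℂ) :
    Complex.normSq ((starRingEnd ℂ) β * z + (starRingEnd ℂ) α) - Complex.normSq (α*z+β)
    = (Complex.normSq α - Complex.normSq β) * (1 - Complex.normSq z) := by
  simp only [Complex.normSq_apply, Complex.mul_re, Complex.mul_im, Complex.add_re,
    Complex.add_im, Complex.conj_re, Complex.conj_im]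
  ring

private lemma rho_formula (α β : ℂ) (h : ℂ → ℂ)
    (hform : ∀ w ∈ ball (0:ℂ) 1, h w = (α * w + β) / ((starRingEnd ℂ) β * w + (starRingEnd ℂ) α))
    (hdet : ‖α‖ ^ 2 - ‖β‖ ^ 2 = 1)
    (z : ℂ) (hz : z ∈ ball (0:ℂ) 1) :
    rho z (h z) = 2 * Real.arsinh (‖(starRingEnd ℂ) β * z^2
      - 2*Complex.I*(α.im:ℂ)*z - β‖ / (1 - ‖z‖ ^ 2)) := by
  have hz1 : ‖z‖ < 1 := by simpa [Complex.dist_eq] using hz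
  have hnz : 0 < 1 - ‖z‖ ^ 2 := by nlinarith [norm_nonneg z]
  have hdet' : Complex.normSq α - Complex.normSq β = 1 := by
    rw [← Complex.sq_norm, ← Complex.sq_norm]; exact hdet
  set D : ℂ := (starRingEnd ℂ) β * z + (starRingEnd ℂ) α with hD
  have hlin := normSq_lin α β z
  have h3 : Complex.normSq z = ‖z‖ ^ 2 := (Complex.sq_norm z).symm
  have hDpos : 0 < Complex.normSq D := by
    nlinarith [Complex.normSq_nonneg (α*z+β), Complex.normSq_nonneg D]
  have hD0 : D ≠ 0 := by
    intro h0; rw [h0] at hDpos; simp at hDpos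
  have habsD : 0 < ‖D‖ := norm_pos_iff.mpr hD0
  have hconjα : (starRingEnd ℂ) α = α - 2*(α.im:ℂ)*Complex.I := by
    have h0 := Complex.sub_conj α
    push_cast at h0
    linear_combination -h0
  have hdiff : z - h z = ((starRingEnd ℂ) β * z^2 - 2*Complex.I*(α.im:ℂ)*z - β) / D := by
    rw [eq_div_iff hD0, hform z hz, ← hD, sub_mul, div_mul_cancel₀ _ hD0, hD, hconjα]
    ring
  have hND : Complex.normSq (α*z+β) = Complex.normSq D - (1 - Complex.normSq z) := by
    rw [hdet'] at hlin; linarith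
  have hnhz : 1 - ‖h z‖ ^ 2 = (1 - ‖z‖ ^ 2) / ‖D‖ ^ 2 := by
    rw [hform z hz, ← hD, norm_div, div_pow, Complex.sq_norm (α*z+β), Complex.sq_norm D, ← h3, hND]
    field_simp
    ring
  rw [rho, hdiff, hnhz, norm_div]
  congr 2
  have hsq : (1 - ‖z‖ ^ 2) * ((1 - ‖z‖ ^ 2) / ‖D‖ ^ 2)
      = ((1 - ‖z‖ ^ 2) / ‖D‖)^2 := by
    field_simp
  rw [hsq, Real.sqrt_sq (by positivity)]
  field_simp

private lemma master (β z : ℂ) (a b : ℝ) (hβ : Complex.normSq β = a^2+b^2-1) :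
    Complex.normSq ((starRingEnd ℂ) β * z^2 - 2*Complex.I*(b:ℂ)*z - β)
    = (a^2-1)*(1-Complex.normSq z)^2
      + (2*(β.re*z.im - β.im*z.re) - b*(1+Complex.normSq z))^2 := by
  have hβ' : β.re^2 + β.im^2 = a^2+b^2-1 := by
    rw [← hβ]; simp [Complex.normSq_apply]; ring
  simp only [Complex.normSq_apply, Complex.mul_re, Complex.mul_im, Complex.sub_re,
    Complex.sub_im, Complex.conj_re, Complex.conj_im, Complex.I_re, Complex.I_im,
    Complex.ofReal_re, Complex.ofReal_im, Complex.re_ofNat, Complex.im_ofNat,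
    pow_two, Complex.one_re, Complex.one_im]
  ring_nf
  linear_combination ((1 - z.re*z.re - z.im*z.im)^2) * hβ'

private lemma normSq_one_sub (c w : ℂ) :
    Complex.normSq (1 - (starRingEnd ℂ) c * w)
    = (1-Complex.normSq c)*(1-Complex.normSq w) + Complex.normSq (w-c) := by
  simp only [Complex.normSq_apply, Complex.mul_re, Complex.mul_im, Complex.sub_re,
    Complex.sub_im, Complex.conj_re, Complex.conj_im, Complex.one_re, Complex.one_im]
  ring

private lemma fact_lemma (β c w : ℂ) (b : ℝ)
    (hEC : (starRingEnd ℂ) β * c - β * (starRingEnd ℂ) c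
      = Complex.I*(b:ℂ)*(1 + c * (starRingEnd ℂ) c)) :
    (starRingEnd ℂ) β * w * c - Complex.I*(b:ℂ)*(w+c) - β
      = -(Complex.I*(b:ℂ)*c + β) * (1 - (starRingEnd ℂ) c * w) := by
  linear_combination w * hEC

private lemma mod_lemma (β c : ℂ) (a b : ℝ) (hβ : Complex.normSq β = a^2+b^2-1)
    (hE : 2*(β.re*c.im - β.im*c.re) = b*(1+Complex.normSq c)) :
    Complex.normSq (Complex.I*(b:ℂ)*c + β) = a^2-1 := by
  have hβ' : β.re^2 + β.im^2 = a^2+b^2-1 := by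
    rw [← hβ]; simp [Complex.normSq_apply]; ring
  simp only [Complex.normSq_apply, Complex.mul_re, Complex.mul_im, Complex.add_re,
    Complex.add_im, Complex.I_re, Complex.I_im, Complex.ofReal_re, Complex.ofReal_im] at hE ⊢
  linear_combination hβ' - b * hE

private lemma identI (β c w : ℂ) (b : ℝ) :
    ((starRingEnd ℂ) β * w^2 - 2*Complex.I*(b:ℂ)*w - β)
      * ((starRingEnd ℂ) β * c^2 - 2*Complex.I*(b:ℂ)*c - β)
    = ((starRingEnd ℂ) β * w * c - Complex.I*(b:ℂ)*(w+c) - β)^2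
      - ((starRingEnd ℂ) β * β - ((b:ℂ))^2) * (w-c)^2 := by
  ring_nf
  rw [Complex.I_sq]
  ring

set_option maxHeartbeats 1000000 in
theorem displacement_hyperbolic_automorphism (α β : ℂ) (h : ℂ → ℂ)
    (hform : ∀ w ∈ ball (0:ℂ) 1, h w = (α * w + β) / ((starRingEnd ℂ) β * w + (starRingEnd ℂ) α))
    (hdet : ‖α‖ ^ 2 - ‖β‖ ^ 2 = 1)
    (hhyperbolic : 1 < |α.re|)
    (c : ℂ) (hc : c ∈ ball (0:ℂ) 1)
    (haxis : ∀ w ∈ ball (0:ℂ) 1, rho c (h c) ≤ rho w (h w))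
    (w : ℂ) (hw : w ∈ ball (0:ℂ) 1) :
    rho w (h w) ≤ Real.exp (rho w c) * rho c (h c) := by
  have ha2 : 1 < α.re^2 := by nlinarith [_root_.sq_abs α.re, abs_nonneg α.re]
  have hβ : Complex.normSq β = α.re^2 + α.im^2 - 1 := by
    have h1 : ‖α‖ ^ 2 = Complex.normSq α := Complex.sq_norm α
    have h2 : ‖β‖ ^ 2 = Complex.normSq β := Complex.sq_norm β
    have h3 : Complex.normSq α = α.re^2 + α.im^2 := by
      simp [Complex.normSq_apply]; ring
    linarith
  set σ := Real.sqrt (α.re^2-1) with hσdef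
  have hσ2 : σ^2 = α.re^2-1 := Real.sq_sqrt (by linarith)
  have hσpos : 0 < σ := Real.sqrt_pos.mpr (by linarith)
  set Q : ℂ → ℂ := fun z => (starRingEnd ℂ) β * z^2 - 2*Complex.I*(α.im:ℂ)*z - β with hQ
  have hrho : ∀ z ∈ ball (0:ℂ) 1,
      rho z (h z) = 2 * Real.arsinh (‖Q z‖ / (1 - ‖z‖ ^ 2)) := by
    intro z hz
    simp only [hQ]
    exact rho_formula α β h hform hdet z hz
  have hnz : ∀ z : ℂ, z ∈ ball (0:ℂ) 1 → 0 < 1 - ‖z‖ ^ 2 := by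
    intro z hz
    have : ‖z‖ < 1 := by simpa [Complex.dist_eq] using hz
    nlinarith [norm_nonneg z]
  -- the special point c₀ on the axis
  set r := ‖β‖ with hrdef
  have hr2 : r^2 = α.re^2+α.im^2-1 := by rw [hrdef, Complex.sq_norm, hβ]
  have hrpos : 0 < r := by nlinarith [norm_nonneg β]
  have hbr : |α.im| < r := by nlinarith [_root_.sq_abs α.im, abs_nonneg α.im]
  have hrσpos : (0:ℝ) < r + σ := by positivity
  set x := α.im/(r+σ) with hxdef
  have hx : x*(r+σ) = α.im := by rw [hxdef]; field_simp
  have him2 : α.im^2 = r^2 - σ^2 := by rw [hr2, hσ2]; ring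
  have hxlt : |x| < 1 := by
    rw [hxdef, abs_div, _root_.abs_of_pos hrσpos, div_lt_one hrσpos]
    linarith
  set t := x/r with htdef
  have htr : t*r = x := by rw [htdef]; field_simp
  set c₀ : ℂ := Complex.I * (t : ℝ) * β with hc₀def
  have habsc₀ : ‖c₀‖ = |x| := by
    rw [hc₀def, norm_mul, norm_mul, Complex.norm_I, Complex.norm_real, Real.norm_eq_abs, one_mul, ← hrdef,
      htdef, abs_div, _root_.abs_of_pos hrpos]
    field_simp
  have hc₀ball : c₀ ∈ ball (0:ℂ) 1 := by
    rw [mem_ball_zero_iff, habsc₀]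
    exact hxlt
  have hnormc₀ : Complex.normSq c₀ = x^2 := by
    rw [← Complex.sq_norm, habsc₀, _root_.sq_abs]
  have hnc : 0 < 1 - ‖c‖ ^ 2 := hnz c hc
  have hnw : 0 < 1 - ‖w‖ ^ 2 := hnz w hw
  have hnc₀ : 0 < 1 - ‖c₀‖ ^ 2 := hnz c₀ hc₀ball
  have hβr : β.re^2 + β.im^2 = r^2 := by
    rw [hr2, ← hβ]; simp [Complex.normSq_apply]; ring
  have hc₀re : c₀.re = -t * β.im := by
    rw [hc₀def]
    simp [Complex.mul_re, Complex.mul_im]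
  have hc₀im : c₀.im = t * β.re := by
    rw [hc₀def]
    simp [Complex.mul_re, Complex.mul_im]
  have hE0 : 2*x*r = α.im*(1+x^2) := by
    have key : (2*x*r)*(r+σ)^2 = (α.im*(1+x^2))*(r+σ)^2 := by
      linear_combination (2*r*(r+σ) - 2*α.im^2 - α.im*(x*(r+σ)-α.im)) * hx + (-α.im) * him2
    exact mul_right_cancel₀ (pow_ne_zero 2 (ne_of_gt hrσpos)) key
  have hEc₀ : 2*(β.re*c₀.im - β.im*c₀.re) = α.im*(1+Complex.normSq c₀) := by
    rw [hc₀re, hc₀im, hnormc₀]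
    linear_combination 2*t*hβr + 2*r*htr + hE0
  -- |Q c₀| = σ (1 - |c₀|²)
  have hmc₀ : Complex.normSq (Q c₀) = (α.re^2-1)*(1-Complex.normSq c₀)^2
      + (2*(β.re*c₀.im - β.im*c₀.re) - α.im*(1+Complex.normSq c₀))^2 := by
    simp only [hQ]; exact master β c₀ α.re α.im hβ
  have hQc₀ : ‖Q c₀‖ = σ * (1 - ‖c₀‖^2) := by
    have h1 : ‖Q c₀‖^2 = (σ * (1 - ‖c₀‖^2))^2 := by
      have hE0' : 2*(β.re*c₀.im - β.im*c₀.re) - α.im*(1+Complex.normSq c₀) = 0 := by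
        linarith
      rw [Complex.sq_norm, hmc₀, hE0', ← Complex.sq_norm c₀]
      linear_combination (-(1 - ‖c₀‖^2)^2) * hσ2
    have h2 : (0:ℝ) ≤ σ * (1 - ‖c₀‖^2) := by positivity
    calc ‖Q c₀‖ = Real.sqrt (‖Q c₀‖^2) :=
          (Real.sqrt_sq (norm_nonneg _)).symm
      _ = Real.sqrt ((σ * (1 - ‖c₀‖^2))^2) := by rw [h1]
      _ = σ * (1 - ‖c₀‖^2) := Real.sqrt_sq h2
  -- minimality at c gives |Q c| ≤ σ (1-|c|²)
  have hmin : ‖Q c‖ ≤ σ * (1 - ‖c‖^2) := by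
    have h1 := haxis c₀ hc₀ball
    rw [hrho c hc, hrho c₀ hc₀ball] at h1
    have h2 : ‖Q c‖ / (1 - ‖c‖ ^ 2)
        ≤ ‖Q c₀‖ / (1 - ‖c₀‖ ^ 2) :=
      Real.arsinh_le_arsinh.mp (by linarith)
    rw [hQc₀, mul_div_assoc, div_self (ne_of_gt hnc₀), mul_one] at h2
    calc ‖Q c‖ = ‖Q c‖ / (1 - ‖c‖ ^ 2) * (1 - ‖c‖^2) := by
          field_simp
      _ ≤ σ * (1 - ‖c‖^2) := by
          apply mul_le_mul_of_nonneg_right h2 hnc.le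
  -- axis equation at c
  have hmc : Complex.normSq (Q c) = (α.re^2-1)*(1-Complex.normSq c)^2
      + (2*(β.re*c.im - β.im*c.re) - α.im*(1+Complex.normSq c))^2 := by
    simp only [hQ]; exact master β c α.re α.im hβ
  have hEc : 2*(β.re*c.im - β.im*c.re) = α.im*(1+Complex.normSq c) := by
    rw [← Complex.sq_norm c]
    have h1 : ‖Q c‖^2 ≤ (σ* (1 - ‖c‖^2))^2 :=
      pow_le_pow_left₀ (norm_nonneg _) hmin 2
    rw [Complex.sq_norm, hmc, ← Complex.sq_norm c] at h1
    have heq : (σ*(1 - ‖c‖^2))^2 = (α.re^2-1)*(1-‖c‖^2)^2 := by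
      rw [mul_pow, hσ2]
    have h2 : (2*(β.re*c.im - β.im*c.re) - α.im*(1+‖c‖^2))^2 ≤ 0 := by
      linarith [h1, heq]
    have h3 : (2*(β.re*c.im - β.im*c.re) - α.im*(1+‖c‖^2)) = 0 := by
      have h4 : (2*(β.re*c.im - β.im*c.re) - α.im*(1+‖c‖^2))^2 = 0 :=
        le_antisymm h2 (sq_nonneg _)
      exact pow_eq_zero_iff two_ne_zero |>.mp h4
    linarith
  have hQc : ‖Q c‖ = σ * (1 - ‖c‖^2) := by
    have h1 : ‖Q c‖^2 = (σ * (1 - ‖c‖^2))^2 := by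
      have hE0' : 2*(β.re*c.im - β.im*c.re) - α.im*(1+Complex.normSq c) = 0 := by linarith
      rw [Complex.sq_norm, hmc, hE0', ← Complex.sq_norm c]
      linear_combination (-(1 - ‖c‖^2)^2) * hσ2
    have h2 : (0:ℝ) ≤ σ * (1 - ‖c‖^2) := by positivity
    calc ‖Q c‖ = Real.sqrt (‖Q c‖^2) :=
          (Real.sqrt_sq (norm_nonneg _)).symm
      _ = Real.sqrt ((σ * (1 - ‖c‖^2))^2) := by rw [h1]
      _ = σ * (1 - ‖c‖^2) := Real.sqrt_sq h2
  -- complex form of the axis equation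
  have hEC : (starRingEnd ℂ) β * c - β * (starRingEnd ℂ) c
      = Complex.I*(α.im:ℂ)*(1 + c * (starRingEnd ℂ) c) := by
    rw [Complex.normSq_apply] at hEc
    apply Complex.ext
    · simp only [Complex.mul_re, Complex.mul_im, Complex.sub_re, Complex.sub_im,
        Complex.conj_re, Complex.conj_im, Complex.I_re, Complex.I_im, Complex.add_re,
        Complex.add_im, Complex.one_re, Complex.one_im, Complex.ofReal_re, Complex.ofReal_im]
      ring
    · simp only [Complex.mul_re, Complex.mul_im, Complex.sub_re, Complex.sub_im,
        Complex.conj_re, Complex.conj_im, Complex.I_re, Complex.I_im, Complex.add_re,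
        Complex.add_im, Complex.one_re, Complex.one_im, Complex.ofReal_re, Complex.ofReal_im]
      linear_combination hEc
  set QS : ℂ := (starRingEnd ℂ) β * w * c - Complex.I*(α.im:ℂ)*(w+c) - β with hQS
  have hfact : QS = -(Complex.I*(α.im:ℂ)*c + β) * (1 - (starRingEnd ℂ) c * w) :=
    fact_lemma β c w α.im hEC
  have hmod : Complex.normSq (Complex.I*(α.im:ℂ)*c + β) = α.re^2-1 :=
    mod_lemma β c α.re α.im hβ hEc
  -- key inequality
  have hkey : ‖Q w‖ * ‖Q c‖
      ≤ (α.re^2-1) * ((1-‖c‖^2)*(1-‖w‖^2) + 2*‖w-c‖^2) := by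
    have hprod : Q w * Q c = QS^2 - ((starRingEnd ℂ) β * β - ((α.im:ℂ))^2) * (w-c)^2 := by
      simp only [hQ, hQS]; exact identI β c w α.im
    have htri : ‖Q w * Q c‖
        ≤ ‖QS^2‖ + ‖((starRingEnd ℂ) β * β - ((α.im:ℂ))^2) * (w-c)^2‖ := by
      rw [hprod]
      have := norm_sub_le (QS^2) (((starRingEnd ℂ) β * β - ((α.im:ℂ))^2) * (w-c)^2)
      simpa using this
    have hQS2 : ‖QS^2‖
        = (α.re^2-1) * ((1-‖c‖^2)*(1-‖w‖^2) + ‖w-c‖^2) := by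
      rw [norm_pow, Complex.sq_norm, hfact, map_mul, Complex.normSq_neg, hmod, normSq_one_sub,
        ← Complex.sq_norm c, ← Complex.sq_norm w, ← Complex.sq_norm (w-c)]
    have hD2 : ‖((starRingEnd ℂ) β * β - ((α.im:ℂ))^2) * (w-c)^2‖
        = (α.re^2-1) * ‖w-c‖^2 := by
      have hc1 : (starRingEnd ℂ) β * β - ((α.im:ℂ))^2 = ((α.re^2-1 : ℝ) : ℂ) := by
        rw [mul_comm, Complex.mul_conj, hβ]
        push_cast
        ring
      rw [norm_mul, hc1, Complex.norm_real, Real.norm_eq_abs, norm_pow, _root_.abs_of_nonneg (by linarith : (0:ℝ) ≤ α.re^2-1)]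
    rw [← norm_mul]
    calc ‖Q w * Q c‖
        ≤ ‖QS^2‖ + ‖((starRingEnd ℂ) β * β - ((α.im:ℂ))^2) * (w-c)^2‖ := htri
      _ = (α.re^2-1) * ((1-‖c‖^2)*(1-‖w‖^2) + 2*‖w-c‖^2) := by
          rw [hQS2, hD2]; ring
  -- cosh of the distance
  have hT2 : (‖w-c‖ / Real.sqrt ((1 - ‖w‖ ^ 2) * (1 - ‖c‖ ^ 2)))^2
      = ‖w-c‖^2 / ((1 - ‖w‖ ^ 2) * (1 - ‖c‖ ^ 2)) := by
    rw [div_pow, Real.sq_sqrt (by positivity)]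
  have hcosh : Real.cosh (rho w c)
      = ((1 - ‖w‖ ^ 2) * (1 - ‖c‖ ^ 2) + 2*‖w-c‖^2)
        / ((1 - ‖w‖ ^ 2) * (1 - ‖c‖ ^ 2)) := by
    rw [rho, Real.cosh_two_mul, Real.cosh_sq, Real.sinh_arsinh, hT2]
    field_simp
    ring
  -- bound on the displacement at w
  have hSw : ‖Q w‖ / (1 - ‖w‖ ^ 2) ≤ Real.cosh (rho w c) * σ := by
    have h1 : ‖Q w‖ * (1 - ‖c‖ ^ 2)
        ≤ σ * ((1 - ‖w‖ ^ 2) * (1 - ‖c‖ ^ 2) + 2*‖w-c‖^2) := by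
      have e1 : ‖Q w‖ * (σ * (1 - ‖c‖^2))
          ≤ (α.re^2-1) * ((1-‖c‖^2)*(1-‖w‖^2) + 2*‖w-c‖^2) := by
        rw [← hQc]; exact hkey
      have e2 : (α.re^2-1) * ((1-‖c‖^2)*(1-‖w‖^2) + 2*‖w-c‖^2)
          = σ * (σ * ((1 - ‖w‖ ^ 2) * (1 - ‖c‖ ^ 2)
            + 2*‖w-c‖^2)) := by
        rw [← hσ2]; ring
      rw [e2] at e1
      have e3 : σ * (‖Q w‖ * (1 - ‖c‖ ^ 2))
          ≤ σ * (σ * ((1 - ‖w‖ ^ 2) * (1 - ‖c‖ ^ 2)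
            + 2*‖w-c‖^2)) := by
        calc σ * (‖Q w‖ * (1 - ‖c‖ ^ 2))
            = ‖Q w‖ * (σ * (1 - ‖c‖^2)) := by ring
          _ ≤ _ := e1
      exact le_of_mul_le_mul_left e3 hσpos
    rw [div_le_iff₀ hnw, hcosh]
    have e4 : ((1 - ‖w‖ ^ 2) * (1 - ‖c‖ ^ 2) + 2*‖w-c‖^2)
          / ((1 - ‖w‖ ^ 2) * (1 - ‖c‖ ^ 2)) * σ * (1 - ‖w‖ ^ 2)
        = σ * ((1 - ‖w‖ ^ 2) * (1 - ‖c‖ ^ 2) + 2*‖w-c‖^2)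
          / (1 - ‖c‖ ^ 2) := by
      field_simp
    rw [e4, le_div_iff₀ hnc]
    exact h1
  -- conclusion
  rw [hrho w hw, hrho c hc]
  have hSc : ‖Q c‖ / (1 - ‖c‖ ^ 2) = σ := by
    rw [hQc, mul_div_assoc, div_self (ne_of_gt hnc), mul_one]
  rw [hSc]
  have hd0 : 0 ≤ rho w c := by
    rw [rho]
    have : 0 ≤ Real.arsinh (‖w - c‖ /
        Real.sqrt ((1 - ‖w‖ ^ 2) * (1 - ‖c‖ ^ 2))) := by
      rw [← Real.arsinh_zero]
      exact Real.arsinh_le_arsinh.mpr (by positivity)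
    linarith
  have hchain := arsinh_cosh_mul_le (rho w c) σ hd0 hσpos.le
  calc 2 * Real.arsinh (‖Q w‖ / (1 - ‖w‖ ^ 2))
      ≤ 2 * Real.arsinh (Real.cosh (rho w c) * σ) := by
        have := Real.arsinh_le_arsinh.mpr hSw
        linarith
    _ ≤ 2 * (Real.exp (rho w c) * Real.arsinh σ) := by linarith
    _ = Real.exp (rho w c) * (2 * Real.arsinh σ) := by ring
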